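/- For each integer q ≥ 1 set t(q) := ⌊q^{1/3}⌋ and r(q) := ⌊q^{1/2}⌋, and let p(q) ∈ {1, …, q−1} be the inverse of t(q) modulo q when t(q) and q are coprime, and p(q) := 0 otherwise. Let FS_q(2,3) := { (s·p(q)/q mod 1, s·p(q)·r(q)/q mod 1) : 1 ≤ s ≤ 2t(q) } ⊂ [0,1)², and FS(2,3) := ⋃_{q≥1} FS_q(2,3). Then FS(2,3) is dense in [0,1]² (equivalently, dense in the 2-torus 𝕋²). -/

import Mathlib

/-- `t(q) = ⌊q^{1/3}⌋`. -/
noncomputable def tq (q : ℕ) : ℕ := ⌊(q : ℝ) ^ ((1 : ℝ) / 3)⌋₊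

/-- `r(q) = ⌊q^{1/2}⌋`. -/
noncomputable def rq (q : ℕ) : ℕ := ⌊(q : ℝ) ^ ((1 : ℝ) / 2)⌋₊

/-- `p(q)` is the inverse of `t(q)` modulo `q` (taken in `{1, …, q-1}`) when `t(q)` and `q`
are coprime, and `0` otherwise. -/
noncomputable def pq (q : ℕ) : ℕ :=
  if Nat.Coprime (tq q) q then (((tq q : ZMod q))⁻¹).val else 0

/-- The set of frequencies `FS(2,3) = ⋃_q FS_q(2,3)`, where
`FS_q(2,3) = {(s p(q)/q mod 1, s p(q) r(q)/q mod 1) : 1 ≤ s ≤ 2 t(q)}`. -/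
noncomputable def FS23 : Set (ℝ × ℝ) :=
  {v | ∃ q : ℕ, 1 ≤ q ∧ ∃ s : ℕ, 1 ≤ s ∧ s ≤ 2 * tq q ∧
    v = (Int.fract (((s * pq q : ℕ) : ℝ) / (q : ℝ)),
         Int.fract (((s * pq q * rq q : ℕ) : ℝ) / (q : ℝ)))}

lemma floor_rpow_eq {t q k : ℕ} (hk : k ≠ 0) (h1 : t^k ≤ q) (h2 : q < (t+1)^k) :
    ⌊(q : ℝ) ^ ((1 : ℝ) / k)⌋₊ = t := by
  have hk' : (0:ℝ) < 1 / k := by positivity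
  have hkR : (k:ℝ) ≠ 0 := Nat.cast_ne_zero.mpr hk
  have e : ∀ m : ℕ, ((m:ℝ)^(k:ℕ)) ^ ((1:ℝ)/k) = m := by
    intro m
    rw [← Real.rpow_natCast (m:ℝ) k, ← Real.rpow_mul (by positivity)]
    rw [mul_one_div, div_self hkR, Real.rpow_one]
  rw [Nat.floor_eq_iff (by positivity)]
  constructor
  · calc (t:ℝ) = ((t:ℝ)^(k:ℕ)) ^ ((1:ℝ)/k) := (e t).symm
      _ ≤ (q:ℝ) ^ ((1:ℝ)/k) := by
          apply Real.rpow_le_rpow (by positivity) _ (le_of_lt hk')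
          exact_mod_cast h1
  · calc (q:ℝ) ^ ((1:ℝ)/k) < (((t+1:ℕ):ℝ)^(k:ℕ)) ^ ((1:ℝ)/k) := by
          apply Real.rpow_lt_rpow (by positivity) _ hk'
          exact_mod_cast h2
      _ = ((t:ℝ)+1) := by rw [e (t+1)]; push_cast; ring

lemma tq_eq {t q : ℕ} (h1 : t^3 ≤ q) (h2 : q < (t+1)^3) : tq q = t := by
  have h := floor_rpow_eq (t := t) (q := q) (k := 3) (by norm_num) h1 h2
  simpa [tq] using h

lemma rq_eq {t q : ℕ} (h1 : t^2 ≤ q) (h2 : q < (t+1)^2) : rq q = t := by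
  have h := floor_rpow_eq (t := t) (q := q) (k := 2) (by norm_num) h1 h2
  simpa [rq] using h

set_option maxHeartbeats 1000000 in
lemma key (x y : ℝ) (hx0 : 0 ≤ x) (hx1 : x ≤ 1) (hy0 : 0 ≤ y) (hy1 : y ≤ 1)
    (d : ℕ) (hp : d.Prime) (hd : 10 ≤ d) :
    ∃ v ∈ FS23, |v.1 - x| ≤ 3 / d ∧ |v.2 - y| ≤ 3 / d := by
  haveI : Fact d.Prime := ⟨hp⟩
  haveI : NeZero d := ⟨hp.pos.ne'⟩
  have hd2 : 2 ≤ d := by omega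
  set f : ℕ := ⌊x * d⌋₊ with hf
  set g : ℕ := ⌊y * d⌋₊ with hg
  -- choose a ≈ x*d with 1 ≤ a ≤ d-1
  obtain ⟨a, ha1, had, haf1, haf2⟩ :
      ∃ a : ℕ, 1 ≤ a ∧ a ≤ d - 1 ∧ a ≤ f + 1 ∧ min (d-1) f ≤ a := by
    refine ⟨max 1 (min (d-1) f), le_max_left _ _,
      max_le (by omega) (min_le_left _ _), ?_, le_max_right _ _⟩
    exact max_le (by omega) ((min_le_right _ _).trans (Nat.le_succ f))
  -- choose b ≈ y*d with b ≤ d-1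
  obtain ⟨b, hbd, hbg1, hbg2⟩ :
      ∃ b : ℕ, b ≤ d - 1 ∧ b ≤ g ∧ min (d-1) g ≤ b :=
    ⟨min (d-1) g, min_le_left _ _, min_le_right _ _, le_refl _⟩
  -- choose a residue c with a*c ≡ b (mod d)
  obtain ⟨c, hc, hacb⟩ : ∃ c : ℕ, c < d ∧ (a * c) % d = b := by
    have haZ : (a : ZMod d) ≠ 0 := by
      rw [Ne, ZMod.natCast_eq_zero_iff]
      exact Nat.not_dvd_of_pos_of_lt (by omega) (by omega)
    refine ⟨((a : ZMod d)⁻¹ * (b : ZMod d)).val, ZMod.val_lt _, ?_⟩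
    set c : ℕ := ((a : ZMod d)⁻¹ * (b : ZMod d)).val with hcdef
    have h1 : ((a * c : ℕ) : ZMod d) = ((b : ℕ) : ZMod d) := by
      push_cast
      rw [show ((c : ℕ) : ZMod d) = (a : ZMod d)⁻¹ * (b : ZMod d) from
        ZMod.natCast_rightInverse _]
      rw [← mul_assoc, mul_inv_cancel₀ haZ, one_mul]
    have h2 : a * c ≡ b [MOD d] := (ZMod.natCast_eq_natCast_iff _ _ _).mp h1
    rw [Nat.ModEq] at h2
    rw [h2, Nat.mod_eq_of_lt (by omega)]
  -- choose r ≡ c (mod d) in the window (d^3, d^3 + d]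
  obtain ⟨r, hr1, hr2, hrmod⟩ :
      ∃ r : ℕ, d^3 + 1 ≤ r ∧ r ≤ d^3 + d ∧ (a * r) % d = b := by
    refine ⟨d^3 + (if c = 0 then d else c), by split <;> omega, by split <;> omega, ?_⟩
    have hr_c : (d^3 + (if c = 0 then d else c)) ≡ c [MOD d] := by
      show _ % d = c % d
      rw [show d^3 + (if c = 0 then d else c) = (if c = 0 then d else c) + d * d^2 by ring,
        Nat.add_mul_mod_self_left]
      split
      · rename_i h; rw [h]; simp [Nat.mod_self]
      · rfl
    have h3 : a * (d^3 + (if c = 0 then d else c)) ≡ a * c [MOD d] := hr_c.mul_left a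
    rw [Nat.ModEq, hacb] at h3
    exact h3
  -- the quotient K with d*K + b = a*r
  obtain ⟨K, hK⟩ : ∃ K : ℕ, d * K + b = a * r := by
    have h := Nat.div_add_mod (a * r) d
    rw [hrmod] at h
    exact ⟨_, h⟩
  -- choose M with r^2 + 1 ≤ d^2 * M ≤ r^2 + d^2
  obtain ⟨M, hM1, hM2⟩ : ∃ M : ℕ, r^2 + 1 ≤ d^2 * M ∧ d^2 * M ≤ r^2 + d^2 := by
    refine ⟨(r^2 + d^2) / d^2, ?_, Nat.mul_div_le _ _⟩
    have h := Nat.div_add_mod (r^2 + d^2) (d^2)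
    have h2 : (r^2 + d^2) % d^2 < d^2 := Nat.mod_lt _ (by positivity)
    omega
  -- the modulus q
  obtain ⟨q, hq1⟩ : ∃ q : ℕ, q + 1 = d^2 * M := ⟨d^2 * M - 1, by omega⟩
  have hdpow23 : d^2 ≤ d^3 := Nat.pow_le_pow_right (by omega) (by omega)
  have hd3r : d^2 ≤ r := by omega
  have hqr1 : r^2 ≤ q := by omega
  have hqr2 : q < (r+1)^2 := by
    have e : (r+1)^2 = r^2 + 2*r + 1 := by ring
    omega
  have hq6 : d^6 ≤ q := by
    have h1 : (d^3+1)^2 ≤ r^2 := Nat.pow_le_pow_left (by omega) 2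
    have e : (d^3+1)^2 = d^6 + 2*d^3 + 1 := by ring
    omega
  have hq7 : q < (d^2+1)^3 := by
    have h1 : r^2 ≤ (d^3+d)^2 := Nat.pow_le_pow_left hr2 2
    have e1 : (d^3+d)^2 = d^6 + 2*d^4 + d^2 := by ring
    have e2 : (d^2+1)^3 = d^6 + 3*d^4 + 3*d^2 + 1 := by ring
    omega
  have htq : tq q = d^2 := by
    apply tq_eq
    · have e : (d^2)^3 = d^6 := by ring
      omega
    · exact hq7
  have hrq : rq q = r := rq_eq hqr1 hqr2
  have hq2 : 2 ≤ q := by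
    have h1 : 2^6 ≤ d^6 := Nat.pow_le_pow_left (by omega) 6
    omega
  haveI : NeZero q := ⟨by omega⟩
  have hM1' : 1 ≤ M := by
    rcases Nat.eq_zero_or_pos M with h | h
    · rw [h, mul_zero] at hq1; omega
    · exact h
  have hMq : M < q := by
    have h4 : 4 * M ≤ d^2 * M := by
      apply Nat.mul_le_mul_right
      have : 2^2 ≤ d^2 := Nat.pow_le_pow_left (by omega) 2
      omega
    omega
  have hcop : Nat.Coprime (tq q) q := by
    rw [htq]
    exact Nat.Coprime.coprime_dvd_left (⟨M, hq1⟩ : d^2 ∣ q + 1)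
      (by simpa [Nat.Coprime] using Nat.gcd_rec (q+1) q)
  have hpqM : pq q = M := by
    rw [pq, if_pos hcop, htq]
    have hinv : ((d^2 : ℕ) : ZMod q)⁻¹ = ((M : ℕ) : ZMod q) := by
      apply ZMod.inv_eq_of_mul_eq_one
      rw [← Nat.cast_mul, show d^2 * M = q + 1 from hq1.symm]
      push_cast
      simp
    rw [hinv, ZMod.val_cast_of_lt hMq]
  have hs1 : 1 ≤ a * d := Nat.mul_pos (by omega) (by omega)
  have hs2 : a * d ≤ 2 * tq q := by
    rw [htq]
    have h1 : a * d ≤ d * d := Nat.mul_le_mul_right d (by omega)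
    have e : d * d = d^2 := by ring
    omega
  have harqN : a * r < q := by
    have h1 : a * r ≤ d * (d^3 + d) := Nat.mul_le_mul (by omega) hr2
    have e : d * (d^3 + d) = d^4 + d^2 := by ring
    have h2 : d^4 * 4 ≤ d^4 * d^2 := by
      apply Nat.mul_le_mul_left
      have : 2^2 ≤ d^2 := Nat.pow_le_pow_left (by omega) 2
      omega
    have e2 : d^4 * d^2 = d^6 := by ring
    have h3 : d^2 ≤ d^4 := Nat.pow_le_pow_right (by omega) (by omega)
    omega
  -- real versions
  have hD0 : (0:ℝ) < d := by positivity
  have hQ0 : (0:ℝ) < q := by exact_mod_cast (by omega : 0 < q)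
  have hq1R : (d:ℝ)^2 * M = (q:ℝ) + 1 := by exact_mod_cast hq1.symm
  have hKR : (d:ℝ) * K + b = (a:ℝ) * r := by exact_mod_cast hK
  have haR : (a:ℝ) ≤ (d:ℝ) - 1 := by
    have h : (a:ℝ) + 1 ≤ d := by exact_mod_cast (by omega : a + 1 ≤ d)
    linarith
  have hbR : (b:ℝ) ≤ (d:ℝ) - 1 := by
    have h : (b:ℝ) + 1 ≤ d := by exact_mod_cast (by omega : b + 1 ≤ d)
    linarith
  have hdq : (d:ℝ) ≤ q := by
    have h : d ≤ q := by
      have := Nat.le_self_pow (by omega : (6:ℕ) ≠ 0) d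
      omega
    exact_mod_cast h
  have harq : (a:ℝ) * r < q := by exact_mod_cast harqN
  have haq : (a:ℝ) ≤ q := by linarith
  -- value of first coordinate
  have hfrac1 : Int.fract (((a * d * pq q : ℕ) : ℝ) / (q : ℝ)) = (a:ℝ)/d + a/((d:ℝ)*q) := by
    have hval : ((a * d * pq q : ℕ) : ℝ) / (q : ℝ) = (a:ℝ)/d + a/((d:ℝ)*q) := by
      rw [hpqM]
      push_cast
      rw [div_add_div _ _ (ne_of_gt hD0) (by positivity),
        div_eq_div_iff hQ0.ne' (by positivity)]
      linear_combination ((a:ℝ) * d * q) * hq1R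
    rw [hval]
    apply Int.fract_eq_self.mpr
    refine ⟨by positivity, ?_⟩
    have h1 : (a:ℝ)/d + a/((d:ℝ)*q) = ((a:ℝ)*q + a)/((d:ℝ)*q) := by
      field_simp
    rw [h1, div_lt_one (by positivity)]
    have h2 : (a:ℝ) * q ≤ ((d:ℝ) - 1) * q := mul_le_mul_of_nonneg_right haR hQ0.le
    linarith
  -- value of second coordinate
  have hfrac2 : Int.fract (((a * d * pq q * rq q : ℕ) : ℝ) / (q : ℝ))
      = (b:ℝ)/d + (a:ℝ)*r/((d:ℝ)*q) := by
    have hval : ((a * d * pq q * rq q : ℕ) : ℝ) / (q : ℝ)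
        = (K:ℝ) + ((b:ℝ)/d + (a:ℝ)*r/((d:ℝ)*q)) := by
      rw [hpqM, hrq]
      push_cast
      have hRHS : (K:ℝ) + ((b:ℝ)/d + (a:ℝ)*r/((d:ℝ)*q))
          = ((K:ℝ)*((d:ℝ)*q) + (b:ℝ)*q + (a:ℝ)*r)/((d:ℝ)*q) := by
        rw [eq_div_iff (by positivity : ((d:ℝ)*(q:ℝ)) ≠ 0)]
        field_simp
        ring
      rw [hRHS, div_eq_div_iff hQ0.ne' (by positivity)]
      linear_combination ((a:ℝ)*r*q) * hq1R - (q:ℝ)^2 * hKR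
    rw [hval, add_comm, Int.fract_add_natCast]
    apply Int.fract_eq_self.mpr
    refine ⟨by positivity, ?_⟩
    have h1 : (b:ℝ)/d + (a:ℝ)*r/((d:ℝ)*q) = ((b:ℝ)*q + (a:ℝ)*r)/((d:ℝ)*q) := by
      field_simp
    rw [h1, div_lt_one (by positivity)]
    have h2 : (b:ℝ) * q ≤ ((d:ℝ) - 1) * q := mul_le_mul_of_nonneg_right hbR hQ0.le
    linarith
  -- bounds on a and b
  have hfR : (f:ℝ) ≤ x * d := Nat.floor_le (by positivity)
  have hfR2 : x * d < (f:ℝ) + 1 := Nat.lt_floor_add_one _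
  have hgR : (g:ℝ) ≤ y * d := Nat.floor_le (by positivity)
  have hgR2 : y * d < (g:ℝ) + 1 := Nat.lt_floor_add_one _
  have hxd : x * d ≤ d := by
    have := mul_le_mul_of_nonneg_right hx1 hD0.le
    linarith
  have hyd : y * d ≤ d := by
    have := mul_le_mul_of_nonneg_right hy1 hD0.le
    linarith
  have hax1 : (a:ℝ) ≤ x * d + 1 := by
    have h1R : (a:ℝ) ≤ (f:ℝ) + 1 := by exact_mod_cast haf1
    linarith
  have hax2 : x * d - 2 ≤ (a:ℝ) := by
    have h1R : (↑(min (d-1) f) : ℝ) ≤ a := by exact_mod_cast haf2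
    rw [Nat.cast_min, Nat.cast_sub (by omega), Nat.cast_one] at h1R
    have h2 : x * d - 2 ≤ min ((d:ℝ) - 1) f := le_min (by linarith) (by linarith)
    linarith
  have hbx1 : (b:ℝ) ≤ y * d := by
    have h1R : (b:ℝ) ≤ g := by exact_mod_cast hbg1
    linarith
  have hbx2 : y * d - 2 ≤ (b:ℝ) := by
    have h1R : (↑(min (d-1) g) : ℝ) ≤ b := by exact_mod_cast hbg2
    rw [Nat.cast_min, Nat.cast_sub (by omega), Nat.cast_one] at h1R
    have h2 : y * d - 2 ≤ min ((d:ℝ) - 1) g := le_min (by linarith) (by linarith)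
    linarith
  -- small terms
  have hsm1 : (a:ℝ)/((d:ℝ)*q) ≤ 1/d := by
    have e : (1:ℝ)/d = (q:ℝ)/((d:ℝ)*q) := by
      rw [div_eq_div_iff hD0.ne' (by positivity)]; ring
    rw [e]
    gcongr
  have hsm1' : (0:ℝ) ≤ (a:ℝ)/((d:ℝ)*q) := by positivity
  have hsm2 : (a:ℝ)*r/((d:ℝ)*q) ≤ 1/d := by
    have e : (1:ℝ)/d = (q:ℝ)/((d:ℝ)*q) := by
      rw [div_eq_div_iff hD0.ne' (by positivity)]; ring
    have harq' : (a:ℝ)*r ≤ q := harq.le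
    rw [e]
    gcongr
  have hsm2' : (0:ℝ) ≤ (a:ℝ)*r/((d:ℝ)*q) := by positivity
  have haD1 : (a:ℝ)/d ≤ x + 1/d := by
    rw [div_le_iff₀ hD0]
    have e : (x + 1/d) * d = x * d + 1 := by
      rw [add_mul, div_mul_cancel₀ _ hD0.ne']
    rw [e]; exact hax1
  have haD2 : x - 2/d ≤ (a:ℝ)/d := by
    rw [le_div_iff₀ hD0]
    have e : (x - 2/d) * d = x * d - 2 := by
      rw [sub_mul, div_mul_cancel₀ _ hD0.ne']
    rw [e]; exact hax2
  have hbD1 : (b:ℝ)/d ≤ y + 1/d := by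
    rw [div_le_iff₀ hD0]
    have e : (y + 1/d) * d = y * d + 1 := by
      rw [add_mul, div_mul_cancel₀ _ hD0.ne']
    rw [e]; linarith
  have hbD2 : y - 2/d ≤ (b:ℝ)/d := by
    rw [le_div_iff₀ hD0]
    have e : (y - 2/d) * d = y * d - 2 := by
      rw [sub_mul, div_mul_cancel₀ _ hD0.ne']
    rw [e]; exact hbx2
  have e2 : (1:ℝ)/d + 1/d = 2/d := by ring
  have e3 : (2:ℝ)/d ≤ 3/d := by gcongr; norm_num
  refine ⟨(Int.fract (((a * d * pq q : ℕ) : ℝ) / (q : ℝ)),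
           Int.fract (((a * d * pq q * rq q : ℕ) : ℝ) / (q : ℝ))),
          ⟨q, by omega, a * d, hs1, hs2, rfl⟩, ?_, ?_⟩
  · rw [hfrac1, abs_le]
    constructor <;> linarith
  · rw [hfrac2, abs_le]
    constructor <;> linarith

/-- The set of frequencies `FS(2,3)` is dense in `[0,1]²`. -/
theorem FS23_dense : Set.Icc (0 : ℝ) 1 ×ˢ Set.Icc (0 : ℝ) 1 ⊆ closure FS23 := by
  rintro ⟨x, y⟩ ⟨⟨hx0, hx1⟩, hy0, hy1⟩
  rw [Metric.mem_closure_iff]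
  intro ε hε
  obtain ⟨n, hn⟩ := exists_nat_gt (3 / ε)
  obtain ⟨d, hdn, hp⟩ := Nat.exists_infinite_primes (max (n+1) 10)
  have hd10 : 10 ≤ d := le_trans (le_max_right _ _) hdn
  obtain ⟨v, hv, h1, h2⟩ := key x y hx0 hx1 hy0 hy1 d hp hd10
  have hD0 : (0:ℝ) < d := by
    have : 0 < d := by omega
    exact_mod_cast this
  have hnd : (n:ℝ) < d := by exact_mod_cast (by omega : n < d)
  have h3d : 3 / (d:ℝ) < ε := by
    rw [div_lt_iff₀ hD0]
    have h4 : 3 < ε * n := by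
      rw [div_lt_iff₀ hε] at hn
      linarith [mul_comm ε (n:ℝ)]
    nlinarith
  refine ⟨v, hv, ?_⟩
  rw [Prod.dist_eq]
  apply max_lt
  · rw [Real.dist_eq, abs_sub_comm]
    exact lt_of_le_of_lt h1 h3d
  · rw [Real.dist_eq, abs_sub_comm]
    exact lt_of_le_of_lt h2 h3d
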